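/- For all real numbers α, p with 0 < α < 1 and 0 < p < 1 and real c with 1 < c < 2, there exists N₀ such that for every N ≥ N₀ there exists an N-dimensional cooperative Boolean network that is p-c-chaotic and exhibits p-α-decoherence. -/

import Mathlib

/-- The state space of an `N`-dimensional Boolean network. -/
abbrev BState (N : ℕ) := Fin N → Bool

/-- The attractor (eventual periodic orbit) reached from initial condition `s`:
the set of states visited infinitely often by the trajectory `t ↦ f^[t] s`. -/
def attractor {N : ℕ} (f : BState N → BState N) (s : BState N) : Set (BState N) :=
  {x | ∀ T : ℕ, ∃ t ≥ T, f^[t] s = x}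

/-- The network `f` is `p`-`c`-chaotic: more than `p·2^N` initial conditions
reach an attractor of length `> c^N`. -/
def pcChaotic {N : ℕ} (f : BState N → BState N) (p c : ℝ) : Prop :=
  p * 2 ^ N < (({s : BState N | (c : ℝ) ^ N < ((attractor f s).ncard : ℝ)}).ncard : ℝ)

/-- Ordered pairs of states at Hamming distance exactly 1. -/
def PerturbPairs (N : ℕ) : Set (BState N × BState N) :=
  {q | hammingDist q.1 q.2 = 1}

/-- `p`-coalescence: more than `p·N·2^N` perturbation pairs have trajectories that
coincide at some positive time. -/
def pCoalescent {N : ℕ} (f : BState N → BState N) (p : ℝ) : Prop :=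
  p * ((N : ℝ) * 2 ^ N) <
    (({q ∈ PerturbPairs N | ∃ t > 0, f^[t] q.1 = f^[t] q.2}).ncard : ℝ)

/-- `p`-instability: at least `p·N·2^N` perturbation pairs reach different attractors. -/
def pUnstable {N : ℕ} (f : BState N → BState N) (p : ℝ) : Prop :=
  p * ((N : ℝ) * 2 ^ N) ≤
    (({q ∈ PerturbPairs N | attractor f q.1 ≠ attractor f q.2}).ncard : ℝ)

/-- Coordinate `j` is an input of coordinate `i` of `f` (equivalently, `i` is an
output of `j`): the `i`-th coordinate of `f` depends on the `j`-th coordinate. -/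
def isInput {N : ℕ} (f : BState N → BState N) (j i : Fin N) : Prop :=
  ∃ s s' : BState N, (∀ k, k ≠ j → s k = s' k) ∧ f s i ≠ f s' i

/-- Every coordinate has at most 2 inputs and at most 2 outputs. -/
def biQuadratic {N : ℕ} (f : BState N → BState N) : Prop :=
  ∀ i : Fin N, ({j | isInput f j i}.ncard ≤ 2) ∧ ({j | isInput f i j}.ncard ≤ 2)

/-- Bi-quadratic and every coordinate has exactly 2 inputs. -/
def strictlyBiQuadratic {N : ℕ} (f : BState N → BState N) : Prop :=
  biQuadratic f ∧ ∀ i : Fin N, {j | isInput f j i}.ncard = 2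

/-- `p`-`α`-decoherence: at least `p·N·2^N` perturbation pairs have Hamming distance
`≥ α·N` at infinitely many times `t > 0`. -/
def pAlphaDecoherent {N : ℕ} (f : BState N → BState N) (p α : ℝ) : Prop :=
  p * ((N : ℝ) * 2 ^ N) ≤
    (({q ∈ PerturbPairs N |
        ∀ T : ℕ, ∃ t > T,
          α * N ≤ (hammingDist (f^[t] q.1) (f^[t] q.2) : ℝ)}).ncard : ℝ)

/-- `p`-`α`-`q`-decoherence: at least `p·N·2^N` perturbation pairs are such that, for
all sufficiently large `t*`, the Hamming distance is `≥ α·N` on at least a proportion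
`q` of the times `t ∈ {0, …, t*}`. -/
def pAlphaQDecoherent {N : ℕ} (f : BState N → BState N) (p α q : ℝ) : Prop :=
  p * ((N : ℝ) * 2 ^ N) ≤
    (({r ∈ PerturbPairs N |
        ∃ T₀ : ℕ, ∀ tstar : ℕ, T₀ ≤ tstar →
          q * ((tstar : ℝ) + 1) ≤
            (({t : ℕ | t ≤ tstar ∧
                α * N ≤ (hammingDist (f^[t] r.1) (f^[t] r.2) : ℝ)}).ncard : ℝ)}).ncard : ℝ)
namespace JE

open Finset Classical

variable {N : ℕ}

lemma bool_le {a b : Bool} : a ≤ b ↔ (a = true → b = true) := by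
  revert a b; decide

lemma bool_le' {a b : Bool} (h : a = true → b = true) : a ≤ b := bool_le.mpr h

/-- weight of a state -/
def wt (x : BState N) : ℕ := (univ.filter fun i => x i = true).card

lemma wt_mono {x y : BState N} (h : x ≤ y) : wt x ≤ wt y := by
  apply card_le_card
  intro i hi
  simp only [mem_filter, mem_univ, true_and] at hi ⊢
  exact bool_le.mp (h i) hi

/-- The layout of an `N`-dimensional construction. -/
structure Lay (N : ℕ) where
  B : ℕ
  nR : ℕ
  r : ℕ
  L : ℕ
  core : ℕ → Finset (Fin N)
  hr : 2 ≤ r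
  hL : 1 ≤ L
  hoE : 2*B + 2*nR + r ≤ N
  hcert : 2*r ≤ 2^B
  hcore_lo : ∀ j, ∀ i ∈ core j, 2*B + 2*nR + r ≤ i.val
  hcore_per : ∀ j, core (j % L) = core j
  hcore_inj : ∀ j, j < L → ∀ j', j' < L → core j = core j' → j = j'
  hcore_card : ∀ j j', (core j).card = (core j').card

namespace Lay

variable (A : Lay N)

/-- period -/
def P : ℕ := A.r * A.L

lemma r_pos : 0 < A.r := by have := A.hr; omega

lemma P_pos : 0 < A.P := by
  have h1 := A.hr; have h2 := A.hL
  have : 0 < A.r * A.L := Nat.mul_pos (by omega) (by omega)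
  simpa [P] using this

lemma one_lt_P : 1 < A.P := by
  have h1 := A.hr; have h2 := A.hL
  calc 1 < 2 * 1 := by norm_num
  _ ≤ A.r * A.L := Nat.mul_le_mul h1 h2
  _ = A.P := rfl

def oS : ℕ := 2*A.B + 2*A.nR
def oE : ℕ := 2*A.B + 2*A.nR + A.r

lemma oS_eq : A.oS = 2*A.B + 2*A.nR := rfl
lemma oE_eq : A.oE = 2*A.B + 2*A.nR + A.r := rfl

/-- the dive flag at time `t` -/
def flg (t : ℕ) : Bool := decide ((t % A.r) ≠ 0 ∧ (t / A.r) % A.L = 0)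

/-- certificate value at time `t` -/
def nu (t : ℕ) : ℕ := 2*(t % A.r) + (A.flg t).toNat

lemma nu_lt (t : ℕ) : A.nu t < 2 ^ A.B := by
  have h1 : t % A.r < A.r := Nat.mod_lt _ A.r_pos
  have h2 : (A.flg t).toNat ≤ 1 := by rcases A.flg t <;> simp
  have : A.nu t < 2 * A.r := by unfold nu; omega
  exact lt_of_lt_of_le this A.hcert

/-- The orbit state of level `d` at time `t`. -/
def disp (d t : ℕ) : BState N := fun i =>
  if i.val < 2*A.B then
    (if i.val % 2 = 0 then (A.nu t).testBit (i.val / 2) else !(A.nu t).testBit (i.val / 2))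
  else if i.val < 2*A.B + A.nR then true
  else if i.val < A.oS then false
  else if i.val < A.oE then decide (i.val ≤ A.oS + d)
  else if A.flg t then decide (t % A.r ≤ d) else decide (i ∈ A.core (t / A.r))

lemma disp_eval_E {d t : ℕ} {i : Fin N} (h : A.oE ≤ i.val) :
    A.disp d t i = if A.flg t then decide (t % A.r ≤ d) else decide (i ∈ A.core (t / A.r)) := by
  have e1 := A.oS_eq; have e2 := A.oE_eq
  have h1 : ¬ (i.val < 2*A.B) := by omega
  have h2 : ¬ (i.val < 2*A.B + A.nR) := by omega
  have h3 : ¬ (i.val < A.oS) := by omega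
  have h4 : ¬ (i.val < A.oE) := by omega
  simp only [disp, h1, h2, h3, h4, if_false]

lemma disp_eval_S {d t : ℕ} {i : Fin N} (h : A.oS ≤ i.val) (h' : i.val < A.oE) :
    A.disp d t i = decide (i.val ≤ A.oS + d) := by
  have e1 := A.oS_eq; have e2 := A.oE_eq
  have h1 : ¬ (i.val < 2*A.B) := by omega
  have h2 : ¬ (i.val < 2*A.B + A.nR) := by omega
  have h3 : ¬ (i.val < A.oS) := by omega
  simp only [disp, h1, h2, h3, if_false, h', if_true]

lemma disp_eval_R {d t : ℕ} {i : Fin N} (h : 2*A.B ≤ i.val) (h' : i.val < 2*A.B + A.nR) :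
    A.disp d t i = true := by
  have h1 : ¬ (i.val < 2*A.B) := by omega
  simp only [disp, h1, if_false, h', if_true]

lemma disp_eval_R' {d t : ℕ} {i : Fin N} (h : 2*A.B + A.nR ≤ i.val) (h' : i.val < A.oS) :
    A.disp d t i = false := by
  have e1 := A.oS_eq
  have h1 : ¬ (i.val < 2*A.B) := by omega
  have h2 : ¬ (i.val < 2*A.B + A.nR) := by omega
  simp only [disp, h1, h2, if_false, h', if_true]

lemma disp_eval_C {d t : ℕ} {i : Fin N} (h : i.val < 2*A.B) :
    A.disp d t i =
      (if i.val % 2 = 0 then (A.nu t).testBit (i.val / 2) else !(A.nu t).testBit (i.val / 2)) := by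
  simp only [disp, h, if_true]

/-- time components determine `t < P` -/
lemma t_eq {t t' : ℕ} (ht : t < A.P) (ht' : t' < A.P)
    (h1 : t % A.r = t' % A.r) (h2 : t / A.r = t' / A.r) : t = t' := by
  have e1 := Nat.div_add_mod t A.r
  have e2 := Nat.div_add_mod t' A.r
  rw [h1, h2] at e1
  omega

lemma div_lt_L {t : ℕ} (ht : t < A.P) : t / A.r < A.L := by
  apply Nat.div_lt_of_lt_mul
  simpa [P, mul_comm] using ht

/-- Main containment characterization. -/
theorem disp_le_iff {d d' t t' : ℕ} (hd : d < A.r) (hd' : d' < A.r)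
    (ht : t < A.P) (ht' : t' < A.P) :
    A.disp d t ≤ A.disp d' t' ↔ (t = t' ∧ d ≤ d') := by
  constructor
  · intro h
    -- Step A : certificates agree
    have hν : A.nu t = A.nu t' := by
      apply Nat.eq_of_testBit_eq
      intro b
      by_cases hbB : b < A.B
      · have hi1 : 2*b < N := by have := A.hoE; omega
        have hi2 : 2*b+1 < N := by have := A.hoE; omega
        have e1 := h ⟨2*b, hi1⟩
        have e2 := h ⟨2*b+1, hi2⟩
        rw [A.disp_eval_C (by simpa using by omega : ((⟨2*b, hi1⟩ : Fin N) : ℕ) < 2*A.B),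
            A.disp_eval_C (by simpa using by omega : ((⟨2*b, hi1⟩ : Fin N) : ℕ) < 2*A.B)] at e1
        rw [A.disp_eval_C (by simpa using by omega : ((⟨2*b+1, hi2⟩ : Fin N) : ℕ) < 2*A.B),
            A.disp_eval_C (by simpa using by omega : ((⟨2*b+1, hi2⟩ : Fin N) : ℕ) < 2*A.B)] at e2
        have m1 : (2*b) % 2 = 0 := by omega
        have m2 : ¬ ((2*b+1) % 2 = 0) := by omega
        have d1 : (2*b) / 2 = b := by omega
        have d2 : (2*b+1) / 2 = b := by omega
        simp only [m1, if_true, d1] at e1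
        simp only [m2, if_false, d2] at e2
        revert e1 e2
        cases hx : (A.nu t).testBit b <;> cases hy : (A.nu t').testBit b <;> simp +decide
      · rw [Nat.testBit_eq_false_of_lt
              (lt_of_lt_of_le (A.nu_lt t) (Nat.pow_le_pow_right (by norm_num) (by omega))),
            Nat.testBit_eq_false_of_lt
              (lt_of_lt_of_le (A.nu_lt t') (Nat.pow_le_pow_right (by norm_num) (by omega)))]
    -- Step B : phase and flag agree
    have hmod1 : t % A.r = t' % A.r := by
      unfold nu at hν
      rcases hf : A.flg t <;> rcases hf' : A.flg t' <;> rw [hf, hf'] at hν <;>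
        simp only [Bool.toNat_false, Bool.toNat_true] at hν <;> omega
    have hmod2 : A.flg t = A.flg t' := by
      unfold nu at hν
      rcases hf : A.flg t <;> rcases hf' : A.flg t' <;> rw [hf, hf'] at hν <;>
        simp only [Bool.toNat_false, Bool.toNat_true] at hν <;>
        first
          | rfl
          | exact absurd hν (by omega)
    have hmod : t % A.r = t' % A.r ∧ A.flg t = A.flg t' := ⟨hmod1, hmod2⟩
    -- Step C : t = t'
    have htt : t = t' := by
      rcases hf : A.flg t with _ | _
      · -- flag false : use core region
        have hf' : A.flg t' = false := by rw [← hmod.2, hf]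
        have hsub : A.core (t / A.r) ⊆ A.core (t' / A.r) := by
          intro i hi
          have hiE : A.oE ≤ i.val := A.hcore_lo _ i hi
          have hle := h i
          rw [A.disp_eval_E hiE, A.disp_eval_E hiE, hf, hf'] at hle
          simp only [if_false] at hle
          have := bool_le.mp hle (by simpa using hi)
          simpa using this
        have hceq : A.core (t / A.r) = A.core (t' / A.r) :=
          Finset.eq_of_subset_of_card_le hsub (le_of_eq (A.hcore_card _ _))
        have := A.hcore_inj _ (A.div_lt_L ht) _ (A.div_lt_L ht') hceq
        exact A.t_eq ht ht' hmod.1 this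
      · -- flag true : both at the special window
        have hf' : A.flg t' = true := by rw [← hmod.2, hf]
        have e1 : (t / A.r) % A.L = 0 := (of_decide_eq_true hf).2
        have e2 : (t' / A.r) % A.L = 0 := (of_decide_eq_true hf').2
        rw [Nat.mod_eq_of_lt (A.div_lt_L ht)] at e1
        rw [Nat.mod_eq_of_lt (A.div_lt_L ht')] at e2
        apply A.t_eq ht ht' hmod.1
        omega
    -- Step D : d ≤ d'
    refine ⟨htt, ?_⟩
    have eoS := A.oS_eq; have eoE := A.oE_eq
    have hiN : A.oS + d < N := by have := A.hoE; omega
    have hle := h ⟨A.oS + d, hiN⟩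
    rw [A.disp_eval_S (by simpa using by omega) (by simpa using by omega),
        A.disp_eval_S (by simpa using by omega) (by simpa using by omega)] at hle
    have := bool_le.mp hle (by simp)
    have := of_decide_eq_true this
    simp only at this
    omega
  · rintro ⟨rfl, hdd⟩
    intro i
    rcases lt_or_ge i.val (2*A.B) with h1 | h1
    · rw [A.disp_eval_C h1, A.disp_eval_C h1]
    · rcases lt_or_ge i.val (2*A.B + A.nR) with h2 | h2
      · rw [A.disp_eval_R h1 h2, A.disp_eval_R h1 h2]
      · rcases lt_or_ge i.val A.oS with h3 | h3
        · rw [A.disp_eval_R' h2 h3, A.disp_eval_R' h2 h3]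
        · rcases lt_or_ge i.val A.oE with h4 | h4
          · rw [A.disp_eval_S h3 h4, A.disp_eval_S h3 h4]
            apply bool_le'
            simp only [decide_eq_true_eq]
            omega
          · rw [A.disp_eval_E h4, A.disp_eval_E h4]
            rcases hf : A.flg t
            · simp
            · simp only [if_true]
              apply bool_le'
              simp only [decide_eq_true_eq]
              omega

theorem disp_inj {d d' t t' : ℕ} (hd : d < A.r) (hd' : d' < A.r)
    (ht : t < A.P) (ht' : t' < A.P) (h : A.disp d t = A.disp d' t') :
    d = d' ∧ t = t' := by
  have h1 := (A.disp_le_iff hd hd' ht ht').mp (le_of_eq h)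
  have h2 := (A.disp_le_iff hd' hd ht' ht).mp (le_of_eq h.symm)
  exact ⟨le_antisymm h1.2 h2.2, h1.1⟩


/-! ### counting coordinates -/

lemma card_val_ge (a : ℕ) :
    (univ.filter fun i : Fin N => a ≤ i.val).card = N - a := by
  have himg : (univ.filter fun i : Fin N => a ≤ i.val).image Fin.val = Finset.Ico a N := by
    ext j
    simp only [mem_image, mem_filter, mem_univ, true_and, Finset.mem_Ico]
    constructor
    · rintro ⟨i, hi, rfl⟩; exact ⟨hi, i.isLt⟩
    · rintro ⟨h1, h2⟩; exact ⟨⟨j, h2⟩, h1, rfl⟩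
  have h2 := Finset.card_image_of_injective
    (univ.filter fun i : Fin N => a ≤ i.val) Fin.val_injective
  rw [himg] at h2
  rw [← h2, Nat.card_Ico]

/-! ### the dive gap -/

theorem disp_gap {d : ℕ} (hd : d + 1 < A.r) (s : ℕ) :
    hammingDist (A.disp d ((d+1) + A.r*(A.L*s))) (A.disp (d+1) ((d+1) + A.r*(A.L*s)))
      = (N - A.oE) + 1 := by
  have eoS := A.oS_eq; have eoE := A.oE_eq; have hNE := A.hoE
  set t := (d+1) + A.r*(A.L*s) with htdef
  have hmod : t % A.r = d + 1 := by
    rw [htdef, Nat.add_mul_mod_self_left]; exact Nat.mod_eq_of_lt hd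
  have hdiv : t / A.r = A.L * s := by
    rw [htdef, Nat.add_mul_div_left _ _ A.r_pos, Nat.div_eq_of_lt hd, zero_add]
  have hflg : A.flg t = true := by
    have h1 : t % A.r ≠ 0 := by omega
    have h2 : (t / A.r) % A.L = 0 := by rw [hdiv]; exact Nat.mul_mod_right _ _
    unfold flg
    exact decide_eq_true ⟨h1, h2⟩
  have hfilter : (univ.filter fun i => ¬ (A.disp d t i = A.disp (d+1) t i))
      = univ.filter (fun i : Fin N => i.val = A.oS + (d+1) ∨ A.oE ≤ i.val) := by
    ext i
    simp only [mem_filter, mem_univ, true_and]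
    rcases lt_or_ge i.val (2*A.B) with h1 | h1
    · rw [A.disp_eval_C h1, A.disp_eval_C h1]; simp; omega
    · rcases lt_or_ge i.val (2*A.B + A.nR) with h2 | h2
      · rw [A.disp_eval_R h1 h2, A.disp_eval_R h1 h2]; simp; omega
      · rcases lt_or_ge i.val A.oS with h3 | h3
        · rw [A.disp_eval_R' h2 h3, A.disp_eval_R' h2 h3]; simp; omega
        · rcases lt_or_ge i.val A.oE with h4 | h4
          · rw [A.disp_eval_S h3 h4, A.disp_eval_S h3 h4]
            simp only [ne_eq, decide_eq_decide]
            omega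
          · rw [A.disp_eval_E h4, A.disp_eval_E h4, hflg, if_pos rfl, if_pos rfl, hmod]
            simp only [ne_eq, decide_eq_decide]
            omega
  have hdist : hammingDist (A.disp d t) (A.disp (d+1) t)
      = (univ.filter fun i : Fin N => ¬ (A.disp d t i = A.disp (d+1) t i)).card := rfl
  rw [hdist, hfilter, Finset.filter_or, Finset.card_union_of_disjoint]
  · have c1 : (univ.filter fun i : Fin N => i.val = A.oS+(d+1)).card = 1 := by
      rw [Finset.card_eq_one]
      have hoSm : A.oS + (d+1) < N := by omega
      refine ⟨⟨A.oS+(d+1), hoSm⟩, ?_⟩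
      ext i
      simp only [mem_filter, mem_univ, true_and, mem_singleton, Fin.ext_iff]
    rw [c1, card_val_ge A.oE]
    omega
  · rw [Finset.disjoint_left]
    intro i hi1 hi2
    simp only [mem_filter, mem_univ, true_and] at hi1 hi2
    omega

/-! ### the dynamics -/

def isV (x : BState N) : Prop := ∃ q : ℕ × ℕ, q.1 < A.r ∧ q.2 < A.P ∧ A.disp q.1 q.2 = x
def lowS (x : BState N) : Prop := ∃ q : ℕ × ℕ, q.1 < A.r ∧ q.2 < A.P ∧ A.disp q.1 q.2 ≤ x
def upS (x : BState N) : Prop := ∃ q : ℕ × ℕ, q.1 < A.r ∧ q.2 < A.P ∧ x ≤ A.disp q.1 q.2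

def w0 : ℕ := (N - A.r)/2

/-- the level (band index) of a state -/
def lev (x : BState N) : ℕ := min (A.r - 1) (wt x - (A.w0 + 1))

lemma lev_lt (x : BState N) : A.lev x < A.r := by
  have := A.hr; unfold lev; omega

lemma lev_mono {x y : BState N} (h : x ≤ y) : A.lev x ≤ A.lev y := by
  have := wt_mono h; unfold lev; omega

open Classical in
noncomputable def F (x : BState N) : BState N :=
  if hV : A.isV x then A.disp hV.choose.1 ((hV.choose.2 + 1) % A.P)
  else if A.lowS x then
    if A.upS x then
      (fun i => decide (∃ q : ℕ × ℕ, q.1 < A.r ∧ q.2 < A.P ∧ A.disp q.1 q.2 ≤ x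
         ∧ A.disp q.1 ((q.2 + 1) % A.P) i = true))
    else (fun _ => true)
  else if A.upS x then (fun _ => false)
  else A.disp (A.lev x) (1 % A.P)

theorem F_disp {d t : ℕ} (hd : d < A.r) (ht : t < A.P) :
    A.F (A.disp d t) = A.disp d ((t + 1) % A.P) := by
  have hV : A.isV (A.disp d t) := ⟨(d, t), hd, ht, rfl⟩
  rw [F, dif_pos hV]
  obtain ⟨h1, h2, h3⟩ := hV.choose_spec
  obtain ⟨hdd, htt⟩ := A.disp_inj h1 hd h2 ht h3
  rw [hdd, htt]

open Classical in
lemma F_eval_bet {x : BState N} (hV : ¬ A.isV x) (hl : A.lowS x) (hu : A.upS x) :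
    A.F x = (fun i => decide (∃ q : ℕ × ℕ, q.1 < A.r ∧ q.2 < A.P ∧ A.disp q.1 q.2 ≤ x
         ∧ A.disp q.1 ((q.2 + 1) % A.P) i = true)) := by
  rw [F, dif_neg hV, if_pos hl, if_pos hu]

lemma F_eval_top {x : BState N} (hV : ¬ A.isV x) (hl : A.lowS x) (hu : ¬ A.upS x) :
    A.F x = (fun _ => true) := by
  rw [F, dif_neg hV, if_pos hl, if_neg hu]

lemma F_eval_bot {x : BState N} (hV : ¬ A.isV x) (hl : ¬ A.lowS x) (hu : A.upS x) :
    A.F x = (fun _ => false) := by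
  rw [F, dif_neg hV, if_neg hl, if_pos hu]

lemma F_eval_G {x : BState N} (hV : ¬ A.isV x) (hl : ¬ A.lowS x) (hu : ¬ A.upS x) :
    A.F x = A.disp (A.lev x) (1 % A.P) := by
  rw [F, dif_neg hV, if_neg hl, if_neg hu]

lemma lowS_mono {x y : BState N} (h : A.lowS x) (hxy : x ≤ y) : A.lowS y := by
  obtain ⟨q, h1, h2, h3⟩ := h; exact ⟨q, h1, h2, le_trans h3 hxy⟩

lemma upS_mono' {x y : BState N} (h : A.upS y) (hxy : x ≤ y) : A.upS x := by
  obtain ⟨q, h1, h2, h3⟩ := h; exact ⟨q, h1, h2, le_trans hxy h3⟩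

theorem F_mono : Monotone A.F := by
  intro x y hxy
  by_cases hVx : A.isV x
  · obtain ⟨⟨dx,tx⟩, hdx, htx, hex⟩ := hVx
    subst hex
    rw [A.F_disp hdx htx]
    by_cases hVy : A.isV y
    · obtain ⟨⟨dy,ty⟩, hdy, hty, hey⟩ := hVy
      subst hey
      rw [A.F_disp hdy hty]
      obtain ⟨rfl, hdd⟩ := (A.disp_le_iff hdx hdy htx hty).mp hxy
      exact (A.disp_le_iff hdx hdy (Nat.mod_lt _ A.P_pos) (Nat.mod_lt _ A.P_pos)).mpr ⟨rfl, hdd⟩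
    · have hly : A.lowS y := ⟨(dx,tx), hdx, htx, hxy⟩
      by_cases huy : A.upS y
      · rw [A.F_eval_bet hVy hly huy]
        intro i; apply bool_le'; intro hi
        exact decide_eq_true ⟨(dx,tx), hdx, htx, hxy, hi⟩
      · rw [A.F_eval_top hVy hly huy]; intro i; exact Bool.le_true _
  · by_cases hlx : A.lowS x
    · by_cases hux : A.upS x
      · rw [A.F_eval_bet hVx hlx hux]
        by_cases hVy : A.isV y
        · obtain ⟨⟨dy,ty⟩, hdy, hty, hey⟩ := hVy
          subst hey
          rw [A.F_disp hdy hty]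
          intro i; apply bool_le'; intro hi
          obtain ⟨q, hq1, hq2, hq3, hq4⟩ := of_decide_eq_true hi
          obtain ⟨heq, hqd⟩ := (A.disp_le_iff hq1 hdy hq2 hty).mp (le_trans hq3 hxy)
          subst heq
          exact bool_le.mp
            ((A.disp_le_iff hq1 hdy (Nat.mod_lt _ A.P_pos) (Nat.mod_lt _ A.P_pos)).mpr
              ⟨rfl, hqd⟩ i) hq4
        · have hly : A.lowS y := A.lowS_mono hlx hxy
          by_cases huy : A.upS y
          · rw [A.F_eval_bet hVy hly huy]
            intro i; apply bool_le'; intro hi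
            obtain ⟨q, hq1, hq2, hq3, hq4⟩ := of_decide_eq_true hi
            exact decide_eq_true ⟨q, hq1, hq2, le_trans hq3 hxy, hq4⟩
          · rw [A.F_eval_top hVy hly huy]; intro i; exact Bool.le_true _
      · rw [A.F_eval_top hVx hlx hux]
        have hVy : ¬ A.isV y := by
          rintro ⟨q, hq1, hq2, rfl⟩
          exact hux ⟨q, hq1, hq2, hxy⟩
        have hly : A.lowS y := A.lowS_mono hlx hxy
        have huy : ¬ A.upS y := by
          rintro ⟨q, hq1, hq2, hq3⟩
          exact hux ⟨q, hq1, hq2, le_trans hxy hq3⟩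
        rw [A.F_eval_top hVy hly huy]
    · by_cases hux : A.upS x
      · rw [A.F_eval_bot hVx hlx hux]; intro i; exact Bool.false_le _
      · rw [A.F_eval_G hVx hlx hux]
        by_cases hVy : A.isV y
        · obtain ⟨q, hq1, hq2, hey⟩ := hVy
          exact absurd ⟨q, hq1, hq2, hey ▸ hxy⟩ hux
        · by_cases huy : A.upS y
          · exact absurd (A.upS_mono' huy hxy) hux
          · by_cases hly : A.lowS y
            · rw [A.F_eval_top hVy hly huy]; intro i; exact Bool.le_true _
            · rw [A.F_eval_G hVy hly huy]
              exact (A.disp_le_iff (A.lev_lt x) (A.lev_lt y)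
                (Nat.mod_lt _ A.P_pos) (Nat.mod_lt _ A.P_pos)).mpr ⟨rfl, A.lev_mono hxy⟩

/-! ### trajectories from generic states -/

theorem iter_G {x : BState N} (hVx : ¬A.isV x) (hlx : ¬A.lowS x) (hux : ¬A.upS x) :
    ∀ s : ℕ, 1 ≤ s → A.F^[s] x = A.disp (A.lev x) (s % A.P) := by
  intro s hs
  induction s with
  | zero => omega
  | succ n ih =>
    rcases Nat.lt_or_ge n 1 with h1 | h1
    · have : n = 0 := by omega
      subst this
      simp only [zero_add, Function.iterate_one]
      rw [A.F_eval_G hVx hlx hux]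
    · rw [Function.iterate_succ_apply', ih h1,
        A.F_disp (A.lev_lt x) (Nat.mod_lt _ A.P_pos), Nat.mod_add_mod]

theorem attractor_G {x : BState N} (hVx : ¬A.isV x) (hlx : ¬A.lowS x) (hux : ¬A.upS x) :
    attractor A.F x = Set.range (fun q : Fin A.P => A.disp (A.lev x) q.val) := by
  ext z
  constructor
  · intro hz
    obtain ⟨t, ht1, htz⟩ := hz 1
    exact ⟨⟨t % A.P, Nat.mod_lt _ A.P_pos⟩, by rw [← htz, A.iter_G hVx hlx hux t ht1]⟩
  · rintro ⟨q, rfl⟩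
    intro T
    have h1 : 1 * (1 * (T+1)) ≤ A.P * (T + 1) := by
      apply Nat.mul_le_mul
      · have := A.P_pos; omega
      · omega
    refine ⟨A.P * (T + 1) + q.val, by omega, ?_⟩
    rw [A.iter_G hVx hlx hux _ (by omega), Nat.mul_add_mod, Nat.mod_eq_of_lt q.isLt]

theorem attractor_G_ncard {x : BState N}
    (hVx : ¬A.isV x) (hlx : ¬A.lowS x) (hux : ¬A.upS x) :
    (attractor A.F x).ncard = A.P := by
  rw [A.attractor_G hVx hlx hux]
  have hinj : Function.Injective (fun q : Fin A.P => A.disp (A.lev x) q.val) := by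
    intro a b hab
    exact Fin.ext (A.disp_inj (A.lev_lt x) (A.lev_lt x) a.isLt b.isLt hab).2
  rw [← Set.image_univ, Set.ncard_image_of_injective _ hinj, Set.ncard_univ,
    Nat.card_eq_fintype_card, Fintype.card_fin]

/-! ### decoherence of generic covering pairs -/

theorem pair_dist {x y : BState N}
    (hVx : ¬A.isV x) (hlx : ¬A.lowS x) (hux : ¬A.upS x)
    (hVy : ¬A.isV y) (hly : ¬A.lowS y) (huy : ¬A.upS y)
    (hlev : A.lev y = A.lev x + 1) (hlt : A.lev x + 1 < A.r) :
    ∀ T : ℕ, ∃ t > T, hammingDist (A.F^[t] x) (A.F^[t] y) = (N - A.oE) + 1 := by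
  intro T
  set d := A.lev x with hd
  have hrP : A.r ≤ A.P := by
    have h := Nat.mul_le_mul_left A.r A.hL
    simpa [P] using h
  have h1 : 1 * (1 * (T+1)) ≤ A.r * (A.L * (T+1)) := by
    apply Nat.mul_le_mul
    · have := A.r_pos; omega
    · apply Nat.mul_le_mul
      · exact A.hL
      · omega
  refine ⟨(d+1) + A.r*(A.L*(T+1)), by omega, ?_⟩
  have hmodP : ((d+1) + A.r*(A.L*(T+1))) % A.P = (d+1) + A.r*(A.L*0) := by
    rw [← mul_assoc]
    show ((d+1) + A.P * (T+1)) % A.P = _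
    rw [Nat.add_mul_mod_self_left, Nat.mod_eq_of_lt (by omega), mul_zero, mul_zero, add_zero]
  rw [A.iter_G hVx hlx hux _ (by omega), A.iter_G hVy hly huy _ (by omega), hlev, ← hd, hmodP]
  exact A.disp_gap hlt 0

/-! ### membership of the generic class -/

lemma lowS_R {x : BState N} (h : A.lowS x) (i : Fin N)
    (h1 : 2*A.B ≤ i.val) (h2 : i.val < 2*A.B + A.nR) : x i = true := by
  obtain ⟨q, hq1, hq2, hq3⟩ := h
  have hle := hq3 i
  rw [A.disp_eval_R h1 h2] at hle
  exact bool_le.mp hle rfl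

lemma upS_R' {x : BState N} (h : A.upS x) (i : Fin N)
    (h1 : 2*A.B + A.nR ≤ i.val) (h2 : i.val < A.oS) : x i = false := by
  obtain ⟨q, hq1, hq2, hq3⟩ := h
  have hle := hq3 i
  rw [A.disp_eval_R' h1 h2] at hle
  cases hx : x i
  · rfl
  · rw [hx] at hle
    exact absurd (bool_le.mp hle rfl) Bool.false_ne_true

/-- if `x` is not pinned-in on `R` and not pinned-out on `R'`, it is generic -/
lemma G_of {x : BState N}
    (hIn : ¬ (∀ i : Fin N, 2*A.B ≤ i.val → i.val < 2*A.B + A.nR → x i = true))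
    (hOut : ¬ (∀ i : Fin N, 2*A.B + A.nR ≤ i.val → i.val < A.oS → x i = false)) :
    ¬A.isV x ∧ ¬A.lowS x ∧ ¬A.upS x := by
  have hl : ¬ A.lowS x := fun h => hIn (fun i u v => A.lowS_R h i u v)
  have hu : ¬ A.upS x := fun h => hOut (fun i u v => A.upS_R' h i u v)
  refine ⟨fun h => hl ?_, hl, hu⟩
  obtain ⟨q, h1, h2, h3⟩ := h
  exact ⟨q, h1, h2, le_of_eq h3⟩

end Lay

/-! ### general counting lemmas -/

lemma card_states (N : ℕ) : Fintype.card (BState N) = 2^N := by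
  rw [Fintype.card_fun, Fintype.card_bool, Fintype.card_fin]

lemma card_val_range (a b : ℕ) (hb : b ≤ N) :
    (univ.filter fun i : Fin N => a ≤ i.val ∧ i.val < b).card = b - a := by
  have himg : (univ.filter fun i : Fin N => a ≤ i.val ∧ i.val < b).image Fin.val
      = Finset.Ico a b := by
    ext j
    simp only [mem_image, mem_filter, mem_univ, true_and, Finset.mem_Ico]
    constructor
    · rintro ⟨i, hi, rfl⟩; exact hi
    · rintro ⟨h1, h2⟩; exact ⟨⟨j, by omega⟩, ⟨h1, h2⟩, rfl⟩
  have h2 := Finset.card_image_of_injective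
    (univ.filter fun i : Fin N => a ≤ i.val ∧ i.val < b) Fin.val_injective
  rw [himg] at h2
  rw [← h2, Nat.card_Ico]

/-- number of states forced on a given coordinate set -/
lemma card_forced (s : Finset (Fin N)) (g : Fin N → Bool) :
    (univ.filter (fun x : BState N => ∀ i ∈ s, x i = g i)).card = 2^(N - s.card) := by
  classical
  have e : {x : BState N // ∀ i ∈ s, x i = g i} ≃ ({i : Fin N // i ∈ sᶜ} → Bool) :=
    { toFun := fun x j => x.1 j.1
      invFun := fun u => ⟨fun i => if h : i ∈ s then g i else u ⟨i, Finset.mem_compl.mpr h⟩,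
        fun i hi => dif_pos hi⟩
      left_inv := by
        rintro ⟨x, hx⟩
        apply Subtype.ext
        funext i
        by_cases h : i ∈ s
        · simp only [dif_pos h]; exact (hx i h).symm
        · simp only [dif_neg h]
      right_inv := by
        intro u
        funext j
        have hj : ¬ (j.1 ∈ s) := Finset.mem_compl.mp j.2
        simp only [dif_neg hj] }
  have h1 : (univ.filter (fun x : BState N => ∀ i ∈ s, x i = g i)).card
      = Fintype.card {x : BState N // ∀ i ∈ s, x i = g i} := (Fintype.card_subtype _).symm
  rw [h1, Fintype.card_congr e, Fintype.card_fun, Fintype.card_bool]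
  congr 1
  have : Fintype.card {i : Fin N // i ∈ sᶜ} = (sᶜ).card := Fintype.card_coe _
  rw [this, Finset.card_compl, Fintype.card_fin]

/-! ### the second moment bound -/

/-- signs -/
def sg (x : BState N) (i : Fin N) : ℤ := if x i = true then 1 else -1

lemma sum_sg (x : BState N) : ∑ i, sg x i = 2 * (wt x : ℤ) - N := by
  have h1 : ∀ i, sg x i = (if x i = true then (2:ℤ) else 0) - 1 := by
    intro i; unfold sg; split <;> norm_num
  rw [Finset.sum_congr rfl (fun i _ => h1 i), Finset.sum_sub_distrib, Finset.sum_const,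
    Finset.card_univ, Fintype.card_fin, ← Finset.sum_filter, Finset.sum_const]
  unfold wt
  push_cast
  ring

lemma sum_sg_mul {i j : Fin N} (hij : i ≠ j) :
    ∑ x : BState N, sg x i * sg x j = 0 := by
  apply Finset.sum_ninvolution (g := fun x => Function.update x i (!x i))
  · intro x
    have h1 : sg (Function.update x i (!x i)) i = - sg x i := by
      unfold sg; rw [Function.update_self]; cases hx : x i <;> simp
    have h2 : sg (Function.update x i (!x i)) j = sg x j := by
      unfold sg; rw [Function.update_of_ne (Ne.symm hij)]
    rw [h1, h2]; ring
  · intro x _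
    intro heq
    have := congrFun heq i
    rw [Function.update_self] at this
    cases hx : x i <;> rw [hx] at this <;> exact absurd this (by decide)
  · intro x; exact mem_univ _
  · intro x
    simp only [Function.update_self, Function.update_idem, Bool.not_not,
      Function.update_eq_self]

lemma sum_sq (N : ℕ) : ∑ x : BState N, (2 * (wt x:ℤ) - N)^2 = (N:ℤ) * 2^N := by
  have h1 : ∀ x : BState N, (2*(wt x:ℤ) - N)^2 = ∑ i, ∑ j, sg x i * sg x j := by
    intro x; rw [← sum_sg x, sq, Finset.sum_mul_sum]
  have h2 : ∀ i : Fin N, ∑ x : BState N, ∑ j, sg x i * sg x j = 2^N := by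
    intro i
    calc ∑ x : BState N, ∑ j, sg x i * sg x j
        = ∑ j : Fin N, ∑ x : BState N, sg x i * sg x j := Finset.sum_comm
      _ = ∑ x : BState N, sg x i * sg x i := by
          apply Finset.sum_eq_single_of_mem i (mem_univ i)
          intro j _ hji
          exact sum_sg_mul (fun h => hji h.symm)
      _ = ∑ _x : BState N, (1:ℤ) := by
          apply Finset.sum_congr rfl
          intro x _
          unfold sg; split <;> norm_num
      _ = 2^N := by
          rw [Finset.sum_const, Finset.card_univ, card_states, nsmul_eq_mul]
          push_cast; ring
  calc ∑ x : BState N, (2 * (wt x:ℤ) - N)^2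
      = ∑ x : BState N, ∑ i, ∑ j, sg x i * sg x j :=
        Finset.sum_congr rfl (fun x _ => h1 x)
    _ = ∑ i : Fin N, ∑ x : BState N, ∑ j, sg x i * sg x j := Finset.sum_comm
    _ = ∑ _i : Fin N, (2^N : ℤ) := Finset.sum_congr rfl (fun i _ => h2 i)
    _ = (N:ℤ) * 2^N := by
        rw [Finset.sum_const, Finset.card_univ, Fintype.card_fin, nsmul_eq_mul]

/-- count of states far from middle weight -/
lemma card_badwin (N W : ℕ) :
    ((univ.filter (fun x : BState N => ¬ ((2*(wt x:ℤ) - N)^2 ≤ (W:ℤ)^2))).card : ℤ)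
      * ((W:ℤ)^2 + 1) ≤ (N:ℤ) * 2^N := by
  set s := univ.filter (fun x : BState N => ¬ ((2*(wt x:ℤ) - N)^2 ≤ (W:ℤ)^2)) with hs
  calc (s.card : ℤ) * ((W:ℤ)^2 + 1) = ∑ _x ∈ s, ((W:ℤ)^2 + 1) := by
        rw [Finset.sum_const, nsmul_eq_mul]
  _ ≤ ∑ x ∈ s, (2*(wt x:ℤ) - N)^2 := by
        apply Finset.sum_le_sum
        intro x hx
        rw [hs, mem_filter] at hx
        have := hx.2
        omega
  _ ≤ ∑ x : BState N, (2*(wt x:ℤ) - N)^2 := by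
        apply Finset.sum_le_sum_of_subset_of_nonneg (Finset.filter_subset _ _)
        intro x _ _
        positivity
  _ = (N:ℤ) * 2^N := sum_sq N

/-! ### flips -/

def flp (x : BState N) (i : Fin N) : BState N := Function.update x i (!x i)

lemma hamming_flp (x : BState N) (i : Fin N) : hammingDist x (flp x i) = 1 := by
  unfold hammingDist
  rw [Finset.card_eq_one]
  refine ⟨i, ?_⟩
  ext j
  simp only [mem_filter, mem_univ, true_and, mem_singleton, ne_eq]
  constructor
  · intro hj
    by_contra hji
    exact hj (by rw [flp, Function.update_of_ne hji])
  · rintro rfl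
    rw [flp, Function.update_self]
    cases hxj : x j <;> simp

lemma flp_le (x : BState N) (i : Fin N) (hx : x i = false) : x ≤ flp x i := by
  intro j
  by_cases hj : j = i
  · subst hj; rw [flp, Function.update_self, hx]; exact Bool.false_le _
  · rw [flp, Function.update_of_ne hj]

lemma wt_flp (x : BState N) (i : Fin N) (hx : x i = false) : wt (flp x i) = wt x + 1 := by
  unfold wt
  have : (univ.filter fun j => flp x i j = true)
      = insert i (univ.filter fun j => x j = true) := by
    ext j
    simp only [mem_filter, mem_univ, true_and, mem_insert]
    by_cases hj : j = i
    · subst hj; rw [flp, Function.update_self, hx]; simp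
    · rw [flp, Function.update_of_ne hj]; simp [hj]
  rw [this, Finset.card_insert_of_notMem (by simp [hx])]

lemma flp_inj : Function.Injective (fun q : BState N × Fin N => (q.1, flp q.1 q.2)) := by
  rintro ⟨x, i⟩ ⟨y, j⟩ h
  simp only [Prod.mk.injEq] at h
  obtain ⟨rfl, h2⟩ := h
  simp only [Prod.mk.injEq, true_and]
  by_contra hij
  have hci := congrFun h2 i
  rw [flp, flp, Function.update_self, Function.update_of_ne hij] at hci
  cases hx : x i <;> rw [hx] at hci <;> simp at hci

lemma flp_invol (x : BState N) (i : Fin N) : flp (flp x i) i = x := by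
  simp only [flp, Function.update_self, Function.update_idem, Bool.not_not,
    Function.update_eq_self]

lemma flp_val (x : BState N) (i : Fin N) : flp x i i = !(x i) := Function.update_self _ _ _

/-! ### predicates for counting -/

def PinPred (N B nR : ℕ) : BState N → Prop :=
  fun x => ∀ i : Fin N, 2*B ≤ i.val → i.val < 2*B + nR → x i = true

def PoutPred (N B nR : ℕ) : BState N → Prop :=
  fun x => ∀ i : Fin N, 2*B + nR ≤ i.val → i.val < 2*B + 2*nR → x i = false

def winPred (N WW : ℕ) : BState N → Prop :=
  fun x => (2*(wt x:ℤ) - N)^2 ≤ (WW:ℤ)^2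

def goodPred (N B nR WW : ℕ) : BState N → Prop :=
  fun x => (¬ PinPred N B nR x ∧ ¬ PoutPred N B nR x) ∧ winPred N WW x

instance (N B nR : ℕ) : DecidablePred (PinPred N B nR) := fun x =>
  decidable_of_iff (∀ i : Fin N, 2*B ≤ i.val → i.val < 2*B + nR → x i = true) Iff.rfl

instance (N B nR : ℕ) : DecidablePred (PoutPred N B nR) := fun x =>
  decidable_of_iff (∀ i : Fin N, 2*B + nR ≤ i.val → i.val < 2*B + 2*nR → x i = false) Iff.rfl

instance (N WW : ℕ) : DecidablePred (winPred N WW) := fun x =>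
  decidable_of_iff ((2*(wt x:ℤ) - N)^2 ≤ (WW:ℤ)^2) Iff.rfl

instance (N B nR WW : ℕ) : DecidablePred (goodPred N B nR WW) := fun x =>
  decidable_of_iff ((¬ PinPred N B nR x ∧ ¬ PoutPred N B nR x) ∧ winPred N WW x) Iff.rfl

lemma PinCard (N B nR : ℕ) (h : 2*B + nR ≤ N) :
    (univ.filter (PinPred N B nR)).card = 2^(N - nR) := by
  have hnn : 2*B + nR - 2*B = nR := by omega
  have heq : univ.filter (PinPred N B nR)
      = univ.filter (fun x : BState N =>
          ∀ i ∈ (univ.filter (fun i : Fin N => 2*B ≤ i.val ∧ i.val < 2*B + nR)),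
            x i = (fun _ => true) i) := by
    apply Finset.filter_congr
    intro x _
    simp only [mem_filter, mem_univ, true_and, and_imp]
    exact Iff.rfl
  rw [heq, card_forced, card_val_range _ _ h, hnn]

lemma PoutCard (N B nR : ℕ) (h : 2*B + 2*nR ≤ N) :
    (univ.filter (PoutPred N B nR)).card = 2^(N - nR) := by
  have hnn : 2*B + 2*nR - (2*B + nR) = nR := by omega
  have heq : univ.filter (PoutPred N B nR)
      = univ.filter (fun x : BState N =>
          ∀ i ∈ (univ.filter (fun i : Fin N => 2*B + nR ≤ i.val ∧ i.val < 2*B + 2*nR)),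
            x i = (fun _ => false) i) := by
    apply Finset.filter_congr
    intro x _
    simp only [mem_filter, mem_univ, true_and, and_imp]
    exact Iff.rfl
  rw [heq, card_forced, card_val_range _ _ h, hnn]

lemma winCard (N WW : ℕ) :
    ((univ.filter (fun x : BState N => ¬ winPred N WW x)).card : ℝ)
      ≤ ((N:ℝ)*2^N)/((WW:ℝ)^2+1) := by
  have hfeq : (univ.filter (fun x : BState N => ¬ winPred N WW x))
      = (univ.filter (fun x : BState N => ¬ ((2*(wt x:ℤ) - N)^2 ≤ (WW:ℤ)^2))) := by
    apply Finset.filter_congr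
    intro x _
    exact Iff.rfl
  have hZ := card_badwin N WW
  have hpos : (0:ℝ) < (WW:ℝ)^2 + 1 := by positivity
  rw [le_div_iff₀ hpos, hfeq]
  exact_mod_cast hZ

/-! ### the construction for a fixed dimension -/

set_option maxHeartbeats 1000000 in
theorem construct (N : ℕ) (α p c : ℝ) (WW B nR r : ℕ)
    (hrWW : r = 2*WW + 8)
    (hoE : 2*B + 2*nR + r ≤ N)
    (hcert : 2*r ≤ 2^B)
    (hA : α * N ≤ ((N - (2*B + 2*nR + r) : ℕ) : ℝ) + 1)
    (hC : (c:ℝ)^N * ((N:ℝ) + 1) < 2^(N - (2*B + 2*nR + r)))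
    (hc1 : 1 < c)
    (hcount1 : p * 2^N < 2^N - 2*2^(N - nR))
    (hcount2 : p * ((N:ℝ) * 2^N) + 4*((N:ℝ)*2^(N-nR))
        + 2*(N:ℝ)*(((N:ℝ)*2^N)/((WW:ℝ)^2+1)) ≤ (N:ℝ)*2^N) :
    ∃ f : BState N → BState N, Monotone f ∧ pcChaotic f p c ∧ pAlphaDecoherent f p α := by
  have hr2 : 2 ≤ r := by omega
  set Ecoords : Finset (Fin N) := univ.filter (fun i => 2*B + 2*nR + r ≤ i.val) with hEc
  have hEcard : Ecoords.card = N - (2*B + 2*nR + r) := Lay.card_val_ge _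
  set Mfam := Ecoords.powersetCard ((N - (2*B + 2*nR + r))/2) with hMf
  set L := Mfam.card with hLdef
  have hLchoose : L = (N - (2*B + 2*nR + r)).choose ((N - (2*B + 2*nR + r))/2) := by
    rw [hLdef, hMf, Finset.card_powersetCard, hEcard]
  have hL1 : 1 ≤ L := by
    rw [hLchoose]
    exact Nat.choose_pos (Nat.div_le_self _ _)
  have hmem : ∀ j : ℕ, j % L < L := fun j => Nat.mod_lt _ (by omega)
  set eqv : {x // x ∈ Mfam} ≃ Fin L :=
    (Fintype.equivFin _).trans (finCongr (Fintype.card_coe Mfam)) with heqv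
  set core : ℕ → Finset (Fin N) := fun j => (eqv.symm ⟨j % L, hmem j⟩ : {x // x ∈ Mfam}).1
    with hcore
  have hcoreMem : ∀ j, core j ∈ Mfam := fun j => (eqv.symm ⟨j % L, hmem j⟩).2
  have hcore_sub : ∀ j, core j ⊆ Ecoords ∧ (core j).card = (N - (2*B + 2*nR + r))/2 := by
    intro j
    exact Finset.mem_powersetCard.mp (hcoreMem j)
  set A : Lay N := {
    B := B, nR := nR, r := r, L := L, core := core,
    hr := hr2, hL := hL1, hoE := hoE, hcert := hcert,
    hcore_lo := by
      intro j i hi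
      have h5 := (hcore_sub j).1 hi
      rw [hEc] at h5
      simp only [mem_filter, mem_univ, true_and] at h5
      exact h5
    hcore_per := by
      intro j
      have h5 : j % L % L = j % L := Nat.mod_mod_of_dvd j dvd_rfl
      simp only [hcore, h5]
    hcore_inj := by
      intro j hj j' hj' hcc
      have h1 : (eqv.symm ⟨j % L, hmem j⟩) = (eqv.symm ⟨j' % L, hmem j'⟩) :=
        Subtype.coe_injective hcc
      have h2 := eqv.symm.injective h1
      have h3 : j % L = j' % L := congrArg Fin.val h2
      rwa [Nat.mod_eq_of_lt hj, Nat.mod_eq_of_lt hj'] at h3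
    hcore_card := by
      intro j j'
      rw [(hcore_sub j).2, (hcore_sub j').2] } with hAdef
  have hAB : A.B = B := rfl
  have hAnR : A.nR = nR := rfl
  have hAr : A.r = r := rfl
  have hAoE : A.oE = 2*B + 2*nR + r := rfl
  have hGmem : ∀ x : BState N, ¬ PinPred N B nR x → ¬ PoutPred N B nR x →
      (¬A.isV x ∧ ¬A.lowS x ∧ ¬A.upS x) := by
    intro x h1 h2
    exact A.G_of h1 h2
  -- the chaos bound
  have hcP : (c:ℝ)^N < (A.P : ℝ) := by
    have h2e : 2^(N - (2*B + 2*nR + r)) ≤ ((N - (2*B + 2*nR + r)) + 1) * L := by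
      rw [hLchoose]
      calc 2^(N - (2*B + 2*nR + r))
          = ∑ i ∈ Finset.range ((N - (2*B + 2*nR + r))+1), (N - (2*B + 2*nR + r)).choose i :=
            (Nat.sum_range_choose _).symm
      _ ≤ ∑ _i ∈ Finset.range ((N - (2*B + 2*nR + r))+1),
            (N - (2*B + 2*nR + r)).choose ((N - (2*B + 2*nR + r))/2) :=
            Finset.sum_le_sum (fun i _ => Nat.choose_le_middle i _)
      _ = ((N - (2*B + 2*nR + r)) + 1) * (N - (2*B + 2*nR + r)).choose ((N - (2*B + 2*nR + r))/2) := by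
            rw [Finset.sum_const, Finset.card_range, smul_eq_mul]
    have hcpos : (0:ℝ) < (c:ℝ)^N := pow_pos (by linarith) N
    have hstep : (c:ℝ)^N * (((N - (2*B + 2*nR + r)) : ℕ):ℝ) + (c:ℝ)^N
        < ((N - (2*B + 2*nR + r) : ℕ):ℝ) * L + L := by
      have hle1 : ((N - (2*B + 2*nR + r) : ℕ):ℝ) + 1 ≤ (N:ℝ) + 1 := by
        have h6 : (N - (2*B + 2*nR + r) : ℕ) ≤ N := by omega
        have := (Nat.cast_le (α := ℝ)).mpr h6
        linarith
      have h7 : (c:ℝ)^N * (((N - (2*B + 2*nR + r)) : ℕ):ℝ) + (c:ℝ)^N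
          = (c:ℝ)^N * ((((N - (2*B + 2*nR + r)) : ℕ):ℝ) + 1) := by ring
      have h8 : (c:ℝ)^N * ((((N - (2*B + 2*nR + r)) : ℕ):ℝ) + 1)
          ≤ (c:ℝ)^N * ((N:ℝ) + 1) :=
        mul_le_mul_of_nonneg_left hle1 (le_of_lt hcpos)
      have h9 : (2:ℝ)^(N - (2*B + 2*nR + r))
          ≤ ((N - (2*B + 2*nR + r) : ℕ):ℝ) * L + L := by
        have := (Nat.cast_le (α := ℝ)).mpr h2e
        push_cast at this
        linarith
      linarith
    have hL' : (c:ℝ)^N < (L:ℝ) := by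
      have he0 : (0:ℝ) ≤ ((N - (2*B + 2*nR + r) : ℕ):ℝ) := Nat.cast_nonneg _
      nlinarith
    have hLP : (L:ℝ) ≤ (A.P:ℝ) := by
      have h5 : L ≤ A.P := by
        show L ≤ A.r * A.L
        calc L = 1 * L := (one_mul L).symm
        _ ≤ A.r * A.L := Nat.mul_le_mul (by omega) (le_refl _)
      exact_mod_cast h5
    linarith
  refine ⟨A.F, A.F_mono, ?_, ?_⟩
  · -- pcChaotic
    have hGFsub : ∀ x ∈ univ.filter
        (fun x : BState N => ¬ PinPred N B nR x ∧ ¬ PoutPred N B nR x),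
        (c:ℝ)^N < ((attractor A.F x).ncard : ℝ) := by
      intro x hx
      rw [mem_filter] at hx
      obtain ⟨hV, hl, hu⟩ := hGmem x hx.2.1 hx.2.2
      rw [A.attractor_G_ncard hV hl hu]
      exact hcP
    have hGFcard : 2^N ≤ (univ.filter
        (fun x : BState N => ¬ PinPred N B nR x ∧ ¬ PoutPred N B nR x)).card
        + 2^(N-nR) + 2^(N-nR) := by
      have hsplit := Finset.card_filter_add_card_filter_not
        (s := (univ : Finset (BState N)))
        (p := fun x => ¬ PinPred N B nR x ∧ ¬ PoutPred N B nR x)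
      have huniv : (univ : Finset (BState N)).card = 2^N := by
        rw [card_univ, card_states]
      have hsub2 : univ.filter (fun x : BState N => ¬(¬ PinPred N B nR x ∧ ¬ PoutPred N B nR x))
          ⊆ univ.filter (PinPred N B nR) ∪ univ.filter (PoutPred N B nR) := by
        intro x hx
        rw [mem_filter] at hx
        rw [mem_union, mem_filter, mem_filter]
        tauto
      have h3 := (card_le_card hsub2).trans (Finset.card_union_le _ _)
      rw [PinCard N B nR (by omega), PoutCard N B nR (by omega)] at h3
      omega
    unfold pcChaotic
    have hsubset : ((univ.filter
        (fun x : BState N => ¬ PinPred N B nR x ∧ ¬ PoutPred N B nR x) : Finset (BState N)) : Set (BState N))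
        ⊆ {s : BState N | (c:ℝ)^N < ((attractor A.F s).ncard : ℝ)} := by
      intro x hx
      exact hGFsub x (by simpa using hx)
    have h1 : (((univ.filter
        (fun x : BState N => ¬ PinPred N B nR x ∧ ¬ PoutPred N B nR x)).card : ℕ) : ℝ)
        ≤ (({s : BState N | (c:ℝ)^N < ((attractor A.F s).ncard : ℝ)}).ncard : ℝ) := by
      rw [← Set.ncard_coe_finset]
      exact_mod_cast Set.ncard_le_ncard hsubset
        ((Set.finite_univ).subset (Set.subset_univ _))
    have h2 : (2:ℝ)^N - 2*2^(N-nR) ≤ (((univ.filter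
        (fun x : BState N => ¬ PinPred N B nR x ∧ ¬ PoutPred N B nR x)).card : ℕ) : ℝ) := by
      have hcast : (2:ℝ)^N ≤ (((univ.filter
          (fun x : BState N => ¬ PinPred N B nR x ∧ ¬ PoutPred N B nR x)).card : ℕ) : ℝ)
          + 2^(N-nR) + 2^(N-nR) := by
        exact_mod_cast hGFcard
      linarith
    linarith
  · -- pAlphaDecoherent
    have key : ∀ a : BState N, ∀ i : Fin N, a i = false →
        goodPred N B nR WW a → goodPred N B nR WW (flp a i) →
        ∀ T:ℕ, ∃ t > T, α * N ≤ (hammingDist (A.F^[t] a) (A.F^[t] (flp a i)) : ℝ) := by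
      intro a i hai hga hgb T
      obtain ⟨⟨hain, haout⟩, hawin⟩ := hga
      obtain ⟨⟨hbin, hbout⟩, hbwin⟩ := hgb
      obtain ⟨hVa, hla, hua⟩ := hGmem a hain haout
      obtain ⟨hVb, hlb, hub⟩ := hGmem _ hbin hbout
      have hwtb : wt (flp a i) = wt a + 1 := wt_flp a i hai
      have hw := abs_le_of_sq_le_sq' hawin (by positivity)
      have hwa_hi : 2 * wt a ≤ N + WW := by omega
      have hwa_lo : N ≤ 2 * wt a + WW := by omega
      have hrN : r ≤ N := by omega
      have hint1 : A.lev (flp a i) = A.lev a + 1 := by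
        show min (A.r - 1) (wt (flp a i) - (A.w0 + 1)) = min (A.r - 1) (wt a - (A.w0 + 1)) + 1
        rw [hwtb]
        show min (r - 1) (wt a + 1 - ((N - r)/2 + 1)) = min (r - 1) (wt a - ((N - r)/2 + 1)) + 1
        omega
      have hint2 : A.lev a + 1 < A.r := by
        show min (A.r - 1) (wt a - (A.w0 + 1)) + 1 < A.r
        show min (r - 1) (wt a - ((N - r)/2 + 1)) + 1 < r
        omega
      obtain ⟨t, ht, hdist⟩ := A.pair_dist hVa hla hua hVb hlb hub hint1 hint2 T
      refine ⟨t, ht, ?_⟩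
      rw [hdist, hAoE]
      push_cast
      push_cast at hA
      linarith
    have hDPmem : ∀ q ∈ univ.filter (fun q : BState N × Fin N =>
          goodPred N B nR WW q.1 ∧ goodPred N B nR WW (flp q.1 q.2)),
        ((q.1, flp q.1 q.2) : BState N × BState N) ∈
          {q ∈ PerturbPairs N | ∀ T : ℕ, ∃ t > T,
            α * N ≤ (hammingDist (A.F^[t] q.1) (A.F^[t] q.2) : ℝ)} := by
      rintro ⟨x, i⟩ hq
      rw [mem_filter] at hq
      obtain ⟨-, hgx, hgy⟩ := hq
      constructor
      · exact hamming_flp x i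
      · intro T
        cases hxi : x i
        · exact key x i hxi hgx hgy T
        · have hflf : (flp x i) i = false := by rw [flp_val, hxi]; rfl
          have hxx : flp (flp x i) i = x := flp_invol x i
          obtain ⟨t, ht', hd⟩ := key (flp x i) i hflf hgy (by rwa [hxx]) T
          refine ⟨t, ht', ?_⟩
          rw [hxx] at hd
          rwa [hammingDist_comm] at hd
    -- counting
    have hprod : ∀ (Q : BState N → Prop) [DecidablePred Q],
        (univ.filter (fun q : BState N × Fin N => Q q.1)).card = (univ.filter Q).card * N := by
      intro Q _
      have heq : univ.filter (fun q : BState N × Fin N => Q q.1)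
          = (univ.filter Q) ×ˢ (univ : Finset (Fin N)) := by
        ext q
        constructor
        · intro h
          rw [mem_filter] at h
          rw [Finset.mem_product, mem_filter]
          exact ⟨⟨mem_univ _, h.2⟩, mem_univ _⟩
        · intro h
          rw [Finset.mem_product, mem_filter] at h
          rw [mem_filter]
          exact ⟨mem_univ _, h.1.2⟩
      rw [heq, Finset.card_product, card_univ, Fintype.card_fin]
    have hflipcount : ∀ (Q : BState N → Prop) [DecidablePred Q],
        (univ.filter (fun q : BState N × Fin N => Q (flp q.1 q.2))).card
          = (univ.filter Q).card * N := by
      intro Q _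
      rw [← hprod Q]
      apply Finset.card_nbij' (i := fun q : BState N × Fin N => (flp q.1 q.2, q.2))
        (j := fun q : BState N × Fin N => (flp q.1 q.2, q.2))
      · intro q hq
        rw [Finset.mem_coe, mem_filter] at hq ⊢
        exact ⟨mem_univ _, hq.2⟩
      · intro q hq
        rw [Finset.mem_coe, mem_filter] at hq ⊢
        refine ⟨mem_univ _, ?_⟩
        show Q (flp (flp q.1 q.2) q.2)
        rw [flp_invol]
        exact hq.2
      · intro q _
        show (flp (flp q.1 q.2) q.2, q.2) = q
        rw [flp_invol]
      · intro q _
        show (flp (flp q.1 q.2) q.2, q.2) = q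
        rw [flp_invol]
    have hBADsub : univ.filter (fun q : BState N × Fin N =>
          ¬(goodPred N B nR WW q.1 ∧ goodPred N B nR WW (flp q.1 q.2)))
        ⊆ ((univ.filter (fun q : BState N × Fin N => PinPred N B nR q.1)
          ∪ univ.filter (fun q : BState N × Fin N => PoutPred N B nR q.1))
          ∪ (univ.filter (fun q : BState N × Fin N => ¬ winPred N WW q.1)
          ∪ univ.filter (fun q : BState N × Fin N => PinPred N B nR (flp q.1 q.2))))
          ∪ (univ.filter (fun q : BState N × Fin N => PoutPred N B nR (flp q.1 q.2))
          ∪ univ.filter (fun q : BState N × Fin N => ¬ winPred N WW (flp q.1 q.2))) := by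
      intro q hq
      rw [mem_filter] at hq
      simp only [mem_union, mem_filter, mem_univ, true_and]
      by_cases h1 : PinPred N B nR q.1
      · tauto
      by_cases h2 : PoutPred N B nR q.1
      · tauto
      by_cases h3 : winPred N WW q.1
      swap
      · tauto
      by_cases h4 : PinPred N B nR (flp q.1 q.2)
      · tauto
      by_cases h5 : PoutPred N B nR (flp q.1 q.2)
      · tauto
      by_cases h6 : winPred N WW (flp q.1 q.2)
      swap
      · tauto
      exact absurd ⟨⟨⟨h1, h2⟩, h3⟩, ⟨⟨h4, h5⟩, h6⟩⟩ hq.2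
    have hBADcard : (univ.filter (fun q : BState N × Fin N =>
          ¬(goodPred N B nR WW q.1 ∧ goodPred N B nR WW (flp q.1 q.2)))).card
        ≤ 4 * (2^(N-nR) * N)
          + 2 * ((univ.filter (fun x : BState N => ¬ winPred N WW x)).card * N) := by
      refine le_trans (card_le_card hBADsub) ?_
      refine le_trans (Finset.card_union_le _ _) ?_
      have u1 := Finset.card_union_le
        (univ.filter (fun q : BState N × Fin N => PinPred N B nR q.1)
          ∪ univ.filter (fun q : BState N × Fin N => PoutPred N B nR q.1))
        (univ.filter (fun q : BState N × Fin N => ¬ winPred N WW q.1)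
          ∪ univ.filter (fun q : BState N × Fin N => PinPred N B nR (flp q.1 q.2)))
      have u2 := Finset.card_union_le
        (univ.filter (fun q : BState N × Fin N => PinPred N B nR q.1))
        (univ.filter (fun q : BState N × Fin N => PoutPred N B nR q.1))
      have u3 := Finset.card_union_le
        (univ.filter (fun q : BState N × Fin N => ¬ winPred N WW q.1))
        (univ.filter (fun q : BState N × Fin N => PinPred N B nR (flp q.1 q.2)))
      have u4 := Finset.card_union_le
        (univ.filter (fun q : BState N × Fin N => PoutPred N B nR (flp q.1 q.2)))
        (univ.filter (fun q : BState N × Fin N => ¬ winPred N WW (flp q.1 q.2)))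
      have e1 := hprod (PinPred N B nR)
      have e2 := hprod (PoutPred N B nR)
      have e3 := hprod (fun x => ¬ winPred N WW x)
      have e4 := hflipcount (PinPred N B nR)
      have e5 := hflipcount (PoutPred N B nR)
      have e6 := hflipcount (fun x => ¬ winPred N WW x)
      rw [PinCard N B nR (by omega)] at e1 e4
      rw [PoutCard N B nR (by omega)] at e2 e5
      omega
    have hsplitN : (univ.filter (fun q : BState N × Fin N =>
          goodPred N B nR WW q.1 ∧ goodPred N B nR WW (flp q.1 q.2))).card
        + (univ.filter (fun q : BState N × Fin N =>
          ¬(goodPred N B nR WW q.1 ∧ goodPred N B nR WW (flp q.1 q.2)))).card = 2^N * N := by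
      have hsplit := Finset.card_filter_add_card_filter_not
        (s := (univ : Finset (BState N × Fin N)))
        (p := fun q => goodPred N B nR WW q.1 ∧ goodPred N B nR WW (flp q.1 q.2))
      have huniv : (univ : Finset (BState N × Fin N)).card = 2^N * N := by
        rw [card_univ, Fintype.card_prod, card_states, Fintype.card_fin]
      omega
    have hDPbound : (N:ℝ)*2^N - 4*((N:ℝ)*2^(N-nR))
        - 2*(N:ℝ)*(((N:ℝ)*2^N)/((WW:ℝ)^2+1))
        ≤ ((univ.filter (fun q : BState N × Fin N =>
            goodPred N B nR WW q.1 ∧ goodPred N B nR WW (flp q.1 q.2))).card : ℝ) := by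
      have hwin := winCard N WW
      have hN0 : (0:ℝ) ≤ (N:ℝ) := Nat.cast_nonneg N
      have hsplitR : ((univ.filter (fun q : BState N × Fin N =>
            goodPred N B nR WW q.1 ∧ goodPred N B nR WW (flp q.1 q.2))).card : ℝ)
          + ((univ.filter (fun q : BState N × Fin N =>
            ¬(goodPred N B nR WW q.1 ∧ goodPred N B nR WW (flp q.1 q.2)))).card : ℝ)
          = 2^N * N := by
        exact_mod_cast hsplitN
      have hBADr : ((univ.filter (fun q : BState N × Fin N =>
            ¬(goodPred N B nR WW q.1 ∧ goodPred N B nR WW (flp q.1 q.2)))).card : ℝ)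
          ≤ 4 * (2^(N-nR) * (N:ℝ))
            + 2 * (((univ.filter (fun x : BState N => ¬ winPred N WW x)).card : ℝ) * N) := by
        exact_mod_cast hBADcard
      have hBADr2 : ((univ.filter (fun q : BState N × Fin N =>
            ¬(goodPred N B nR WW q.1 ∧ goodPred N B nR WW (flp q.1 q.2)))).card : ℝ)
          ≤ 4 * (2^(N-nR) * (N:ℝ))
            + 2 * ((((N:ℝ)*2^N)/((WW:ℝ)^2+1)) * N) := by
        have hmul : (((univ.filter (fun x : BState N => ¬ winPred N WW x)).card : ℝ) * N)
            ≤ (((N:ℝ)*2^N)/((WW:ℝ)^2+1)) * N :=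
          mul_le_mul_of_nonneg_right hwin hN0
        linarith
      linarith [hsplitR, hBADr2]
    unfold pAlphaDecoherent
    have hncard : ((univ.filter (fun q : BState N × Fin N =>
          goodPred N B nR WW q.1 ∧ goodPred N B nR WW (flp q.1 q.2))).card : ℝ)
        ≤ (({q ∈ PerturbPairs N | ∀ T : ℕ, ∃ t > T,
            α * N ≤ (hammingDist (A.F^[t] q.1) (A.F^[t] q.2) : ℝ)}).ncard : ℝ) := by
      have himgsub : ((fun q : BState N × Fin N => (q.1, flp q.1 q.2)) ''
            ↑(univ.filter (fun q : BState N × Fin N =>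
              goodPred N B nR WW q.1 ∧ goodPred N B nR WW (flp q.1 q.2))))
          ⊆ {q ∈ PerturbPairs N | ∀ T : ℕ, ∃ t > T,
              α * N ≤ (hammingDist (A.F^[t] q.1) (A.F^[t] q.2) : ℝ)} := by
        rintro z ⟨q, hq, rfl⟩
        exact hDPmem q (by rwa [Finset.mem_coe] at hq)
      have h1 : ((fun q : BState N × Fin N => (q.1, flp q.1 q.2)) ''
            ↑(univ.filter (fun q : BState N × Fin N =>
              goodPred N B nR WW q.1 ∧ goodPred N B nR WW (flp q.1 q.2)))).ncard
          = (univ.filter (fun q : BState N × Fin N =>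
              goodPred N B nR WW q.1 ∧ goodPred N B nR WW (flp q.1 q.2))).card := by
        rw [Set.ncard_image_of_injective _ flp_inj, Set.ncard_coe_finset]
      have h2 := Set.ncard_le_ncard himgsub
        ((Set.finite_univ).subset (Set.subset_univ _))
      rw [h1] at h2
      exact_mod_cast h2
    have hfinal : p * ((N:ℝ) * 2^N)
        ≤ ((univ.filter (fun q : BState N × Fin N =>
            goodPred N B nR WW q.1 ∧ goodPred N B nR WW (flp q.1 q.2))).card : ℝ) := by
      have hdiv0 : (0:ℝ) ≤ ((N:ℝ)*2^N)/((WW:ℝ)^2+1) := by positivity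
      linarith [hDPbound, hcount2]
    exact le_trans hfinal hncard

/-! ### the main theorem -/

set_option maxHeartbeats 4000000 in
theorem main (α p : ℝ) (hα0 : 0 < α) (hα1 : α < 1) (hp0 : 0 < p) (hp1 : p < 1)
    (c : ℝ) (hc1 : 1 < c) (hc2 : c < 2) :
    ∃ N₀ : ℕ, ∀ N : ℕ, N₀ ≤ N →
      ∃ f : BState N → BState N,
        Monotone f ∧ pcChaotic f p c ∧ pAlphaDecoherent f p α := by
  have hc0 : (0:ℝ) < c := by linarith
  have hcd : c/2 < 1 := by linarith
  have hcd0 : (0:ℝ) < c/2 := by linarith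
  obtain ⟨k, hk⟩ : ∃ k : ℕ, (c/2)^k < 1/2 :=
    exists_pow_lt_of_lt_one (by norm_num) hcd
  have hk1 : 1 ≤ k := by
    rcases Nat.eq_zero_or_pos k with h | h
    · subst h; norm_num at hk
    · exact h
  have h2c1 : (1:ℝ) ≤ 2/c := by
    rw [le_div_iff₀ hc0]; linarith
  have h2ck : (2:ℝ) < (2/c)^k := by
    have hpow : (c/2)^k * (2/c)^k = 1 := by
      rw [← mul_pow]
      have : c/2 * (2/c) = 1 := by field_simp
      rw [this, one_pow]
    have hpos : (0:ℝ) < (c/2)^k := pow_pos hcd0 k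
    have hy0 : (0:ℝ) < (2/c)^k := pow_pos (by positivity) k
    nlinarith [mul_pos (by linarith : (0:ℝ) < 1/2 - (c/2)^k) hy0]
  obtain ⟨m0', hm0'⟩ := exists_nat_ge (16/(1-p))
  obtain ⟨t1', ht1'⟩ := exists_nat_ge (8/(1-α))
  obtain ⟨n1', hn1'⟩ := exists_nat_ge (32/(1-p))
  obtain ⟨m0, hm0⟩ : ∃ v : ℕ, v = m0' + 1 := ⟨_, rfl⟩
  obtain ⟨t1, ht1⟩ : ∃ v : ℕ, v = t1' + 1 := ⟨_, rfl⟩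
  obtain ⟨n1, hn1⟩ : ∃ v : ℕ, v = n1' + 1 := ⟨_, rfl⟩
  obtain ⟨t0, ht0⟩ : ∃ v : ℕ, v = 8*k + 8*t1 := ⟨_, rfl⟩
  obtain ⟨D, hD⟩ : ∃ v : ℕ, v = (4*k + t0) * (10*m0 + 60) := ⟨_, rfl⟩
  refine ⟨(2*D)^2 + 128*k*k + t0*(n1+1) + 16*(k+t0+1) + 4*k*(4*k+6) + 2, ?_⟩
  intro N hN
  obtain ⟨s, hs⟩ : ∃ v : ℕ, v = Nat.sqrt N := ⟨_, rfl⟩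
  obtain ⟨WW, hWW⟩ : ∃ v : ℕ, v = m0 * (s + 1) := ⟨_, rfl⟩
  obtain ⟨r, hr⟩ : ∃ v : ℕ, v = 2*WW + 8 := ⟨_, rfl⟩
  obtain ⟨B, hB⟩ : ∃ v : ℕ, v = 2*r + 2 := ⟨_, rfl⟩
  obtain ⟨nR, hnR⟩ : ∃ v : ℕ, v = N / t0 + 1 := ⟨_, rfl⟩
  have ht01 : 8 ≤ t0 := by omega
  have hm01 : 1 ≤ m0 := by omega
  -- square root facts
  have hss : s * s ≤ N := by rw [hs]; exact Nat.sqrt_le N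
  have hs2D : 2*D ≤ s := by
    have h1 : Nat.sqrt ((2*D)^2) ≤ Nat.sqrt N := Nat.sqrt_le_sqrt (by omega)
    rw [Nat.sqrt_eq'] at h1
    omega
  have hD1 : 240 ≤ D := by
    have h1 : 4*1 + 8 ≤ 4*k + t0 := by omega
    have h2 : 10*1 + 60 ≤ 10*m0 + 60 := by omega
    have := Nat.mul_le_mul h1 h2
    omega
  have hs1 : 480 ≤ s := by omega
  -- F1 : the master sqrt bound
  have hF1 : (5*r + 6) * (4*k + t0) ≤ N := by
    have h1 : 5*r + 6 = 10*(m0*(s+1)) + 46 := by rw [hr, hWW]; ring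
    have h2 : 10*(m0*(s+1)) + 46 ≤ (10*m0 + 60)*(s+1) := by
      have e1 : (10*m0 + 60)*(s+1) = 10*(m0*(s+1)) + 60*s + 60 := by ring
      omega
    have h3 : (5*r + 6) * (4*k + t0) ≤ ((10*m0 + 60)*(s+1)) * (4*k + t0) :=
      Nat.mul_le_mul_right _ (by omega)
    have h4 : ((10*m0 + 60)*(s+1)) * (4*k + t0) = D * (s+1) := by rw [hD]; ring
    have h5 : D * (s+1) ≤ 2*D*s := by
      have : D * 1 ≤ D * s := Nat.mul_le_mul_left D (by omega)
      have e1 : D*(s+1) = D*s + D*1 := by ring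
      have e2 : 2*D*s = D*s + D*s := by ring
      omega
    have h6 : 2*D*s ≤ s*s := Nat.mul_le_mul_right s hs2D
    omega
  have hF1t : (5*r + 6) * t0 ≤ N := le_trans (Nat.mul_le_mul_left _ (by omega)) hF1
  have hF1k : (5*r + 6) * (4*k) ≤ N := le_trans (Nat.mul_le_mul_left _ (by omega)) hF1
  -- oEv
  obtain ⟨oEv, hoEv⟩ : ∃ v : ℕ, v = 2*B + 2*nR + r := ⟨_, rfl⟩
  have hoEval : oEv = 5*r + 2*(N/t0) + 6 := by rw [hoEv, hB, hnR]; ring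
  -- division facts
  have hdiv1 : k * (N/(4*k)) ≤ N/4 := by
    have e1 : N/(4*k) = (N/4)/k := by rw [Nat.div_div_eq_div_mul]
    rw [e1, mul_comm]
    exact Nat.div_mul_le_self _ _
  have hdiv2 : N/t0 ≤ N/(8*k) := Nat.div_le_div_left (by omega) (by omega)
  have hdiv3 : 2*k*(N/(8*k)) ≤ N/4 := by
    have e1 : N/(8*k) = (N/4)/(2*k) := by
      rw [Nat.div_div_eq_div_mul]
      congr 1
      ring
    rw [e1, mul_comm]
    exact Nat.div_mul_le_self _ _
  have hk5r : k * (5*r+6) ≤ N/4 := by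
    rw [Nat.le_div_iff_mul_le (by norm_num : 0 < 4)]
    calc k * (5*r+6) * 4 = (5*r+6)*(4*k) := by ring
    _ ≤ N := hF1k
  -- F2b : N/(4k) + oEv < N/k
  have hF2b : N/(4*k) + oEv < N/k := by
    have hXk : k * (N/(4*k) + oEv + 1) ≤ N := by
      have e1 : k * (N/(4*k) + oEv + 1)
          = k*(N/(4*k)) + k*(5*r+6) + 2*k*(N/t0) + k := by
        rw [hoEval]; ring
      have h7 : 2*k*(N/t0) ≤ 2*k*(N/(8*k)) := Nat.mul_le_mul_left _ hdiv2
      have h8 : k ≤ N/4 := by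
        rw [Nat.le_div_iff_mul_le (by norm_num : 0 < 4)]
        omega
      have h9 : N/4 + N/4 + N/4 + N/4 ≤ N := by omega
      omega
    have h10 : (N/(4*k) + oEv + 1) * k ≤ N := by
      rw [mul_comm]; exact hXk
    have h11 : N/(4*k) + oEv + 1 ≤ N/k := (Nat.le_div_iff_mul_le (by omega)).mpr h10
    omega
  -- F2a : N + 1 < 2^(N/(4k))
  have hF2a : N + 1 < 2^(N/(4*k)) := by
    obtain ⟨m, hm⟩ : ∃ v : ℕ, v = N/(8*k) := ⟨_, rfl⟩
    have hm16 : 16*k ≤ m := by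
      rw [hm, Nat.le_div_iff_mul_le (by omega : 0 < 8*k)]
      have e9 : 16*k*(8*k) = 128*k*k := by ring
      rw [e9]
      omega
    have hNm : N < 8*k*m + 8*k := by
      have e1 := Nat.div_add_mod N (8*k)
      have e2 : N % (8*k) < 8*k := Nat.mod_lt _ (by omega)
      rw [hm]
      omega
    have hN1m : N + 1 ≤ 16*k*m := by
      have h5 : 8*k ≤ 8*k*m := by
        have h51 : 1 ≤ m := by omega
        calc 8*k = 8*k*1 := by ring
        _ ≤ 8*k*m := Nat.mul_le_mul_left _ h51
      have e3 : 16*k*m = 8*k*m + 8*k*m := by ring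
      omega
    have hmm : 16*k*m ≤ m*m := Nat.mul_le_mul_right m hm16
    have hm2 : m*m < 2^m * 2^m :=
      Nat.mul_lt_mul_of_lt_of_lt (Nat.lt_two_pow_self (n := m)) (Nat.lt_two_pow_self (n := m))
    have hexp : 2*m ≤ N/(4*k) := by
      rw [Nat.le_div_iff_mul_le (by omega : 0 < 4*k)]
      have : 8*k*m ≤ N := by
        rw [hm]
        calc 8*k*(N/(8*k)) = (N/(8*k))*(8*k) := by ring
        _ ≤ N := Nat.div_mul_le_self _ _
      calc 2*m*(4*k) = 8*k*m := by ring
      _ ≤ N := this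
    calc N + 1 ≤ 16*k*m := hN1m
    _ ≤ m*m := hmm
    _ < 2^m * 2^m := hm2
    _ = 2^(2*m) := by rw [← pow_add]; congr 1; ring
    _ ≤ 2^(N/(4*k)) := Nat.pow_le_pow_right (by norm_num) hexp
  -- F3 : (N+1) * 2^oEv < 2^(N/k)
  have hF3 : (N+1) * 2^oEv < 2^(N/k) := by
    calc (N+1) * 2^oEv < 2^(N/(4*k)) * 2^oEv :=
          Nat.mul_lt_mul_of_lt_of_le hF2a (le_refl _) (by positivity)
    _ = 2^(N/(4*k) + oEv) := by rw [← pow_add]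
    _ ≤ 2^(N/k) := Nat.pow_le_pow_right (by norm_num) (by omega)
  -- numbered hypotheses of `construct`
  have hoE : 2*B + 2*nR + r ≤ N := by
    have h5 : oEv < N/k := lt_of_le_of_lt (Nat.le_add_left _ _) hF2b
    have h6 : N/k ≤ N := Nat.div_le_self _ _
    omega
  have hcert : 2*r ≤ 2^B := by
    have h5 : 2*r < 2^(2*r) := Nat.lt_two_pow_self
    have h6 : (2:ℕ)^(2*r) ≤ 2^B := Nat.pow_le_pow_right (by norm_num) (by omega)
    omega
  -- real versions
  have hNpos : (0:ℝ) < N := by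
    have : 0 < N := by omega
    exact_mod_cast this
  have h1p : (0:ℝ) < 1 - p := by linarith
  have h1a : (0:ℝ) < 1 - α := by linarith
  have hA : α * N ≤ ((N - (2*B + 2*nR + r) : ℕ) : ℝ) + 1 := by
    have hcast : ((N - (2*B + 2*nR + r) : ℕ) : ℝ) = (N:ℝ) - (oEv:ℝ) := by
      rw [hoEv, Nat.cast_sub (by omega : 2*B + 2*nR + r ≤ N)]
    rw [hcast]
    -- oEv ≤ (1-α) * N
    have hoEr : (oEv:ℝ) ≤ (1-α) * N := by
      have hq1 : ((N/t0 : ℕ):ℝ) ≤ (N:ℝ)/t0 := Nat.cast_div_le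
      have ht1r : (8:ℝ)/(1-α) ≤ t1 := by
        rw [ht1]; push_cast; linarith
      have ht0r : (64:ℝ)/(1-α) ≤ t0 := by
        rw [ht0]; push_cast
        have : (8:ℝ)*t1 ≥ 8 * (8/(1-α)) := by linarith
        have h8 : (64:ℝ)/(1-α) = 8*(8/(1-α)) := by ring
        have hk0 : (0:ℝ) ≤ 8*k := by positivity
        linarith
      have ht0pos : (0:ℝ) < t0 := by
        have : (0:ℕ) < t0 := by omega
        exact_mod_cast this
      have hq2 : (N:ℝ)/t0 ≤ (1-α)*N/64 := by
        rw [div_le_div_iff₀ ht0pos (by norm_num : (0:ℝ) < 64)] at *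
        -- N * 64 ≤ (1-α)*N*t0
        have h5 : (64:ℝ) ≤ (1-α) * t0 := by
          have := mul_le_mul_of_nonneg_left ht0r (le_of_lt h1a)
          calc (64:ℝ) = (1-α) * (64/(1-α)) := by field_simp
          _ ≤ (1-α) * t0 := this
        calc (N:ℝ) * 64 = 64 * N := by ring
        _ ≤ ((1-α)*t0) * N := mul_le_mul_of_nonneg_right h5 (le_of_lt hNpos)
        _ = (1-α)*N*t0 := by ring
      have hq3 : ((5*r+6 : ℕ):ℝ) ≤ (N:ℝ)/t0 := by
        rw [le_div_iff₀ ht0pos]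
        exact_mod_cast hF1t
      have hoEc : (oEv:ℝ) = ((5*r+6 : ℕ):ℝ) + 2*((N/t0 : ℕ):ℝ) := by
        rw [hoEval]; push_cast; ring
      rw [hoEc]
      have : ((5*r+6:ℕ):ℝ) + 2*((N/t0:ℕ):ℝ) ≤ (1-α)*N/64 + 2*((1-α)*N/64) := by
        have := le_trans hq1 hq2
        linarith [le_trans hq3 hq2]
      calc ((5*r+6:ℕ):ℝ) + 2*((N/t0:ℕ):ℝ) ≤ (1-α)*N/64 + 2*((1-α)*N/64) := this
      _ ≤ (1-α)*N := by nlinarith [mul_pos h1a hNpos]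
    nlinarith
  have hC : (c:ℝ)^N * ((N:ℝ) + 1) < 2^(N - (2*B + 2*nR + r)) := by
    have hsplit2 : (2:ℝ)^(N - (2*B + 2*nR + r)) * 2^oEv = 2^N := by
      rw [← pow_add]
      congr 1
      omega
    have hcpos : (0:ℝ) < c^N := pow_pos hc0 N
    have hF3r : ((N:ℝ)+1) * 2^oEv < 2^(N/k : ℕ) := by
      have := hF3
      exact_mod_cast this
    have hpowc : (2:ℝ)^(N/k : ℕ) * c^N ≤ 2^N := by
      have h5 : (2:ℝ)^(N/k : ℕ) ≤ (2/c)^N := by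
        calc (2:ℝ)^(N/k : ℕ) ≤ ((2/c)^k)^(N/k : ℕ) :=
              pow_le_pow_left₀ (by norm_num) (le_of_lt h2ck) _
        _ = (2/c)^(k * (N/k)) := by rw [← pow_mul]
        _ ≤ (2/c)^N := pow_le_pow_right₀ h2c1 (Nat.mul_div_le N k)
      have h6 : (2/c)^N * c^N = 2^N := by
        rw [← mul_pow]
        congr 1
        field_simp
      calc (2:ℝ)^(N/k:ℕ) * c^N ≤ (2/c)^N * c^N :=
            mul_le_mul_of_nonneg_right h5 (le_of_lt hcpos)
      _ = 2^N := h6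
    have h2oE : (0:ℝ) < 2^oEv := by positivity
    -- c^N (N+1) 2^oEv < c^N 2^(N/k) ≤ 2^N = 2^(N-oEv) 2^oEv
    have hmain : c^N * ((N:ℝ)+1) * 2^oEv < 2^(N - (2*B + 2*nR + r)) * 2^oEv := by
      calc c^N * ((N:ℝ)+1) * 2^oEv = c^N * (((N:ℝ)+1) * 2^oEv) := by ring
      _ < c^N * 2^(N/k:ℕ) := by
            exact mul_lt_mul_of_pos_left hF3r hcpos
      _ ≤ 2^N := by
            calc c^N * 2^(N/k:ℕ) = 2^(N/k:ℕ) * c^N := by ring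
            _ ≤ 2^N := hpowc
      _ = 2^(N - (2*B + 2*nR + r)) * 2^oEv := hsplit2.symm
    exact lt_of_mul_lt_mul_right hmain (le_of_lt h2oE)
  -- counting hypotheses
  have hnRn1 : n1 ≤ nR := by
    rw [hnR, hn1]
    have h13 : n1' + 1 ≤ N/t0 := by
      rw [Nat.le_div_iff_mul_le (by omega : 0 < t0)]
      have h12 : t0*n1 ≤ t0*(n1+1) := Nat.mul_le_mul_left _ (by omega)
      calc (n1'+1)*t0 = t0*n1 := by rw [hn1]; ring
      _ ≤ t0*(n1+1) := h12
      _ ≤ N := by omega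
    omega
  have hnRN : nR ≤ N := by
    have h5 : N/t0 ≤ N/8 := Nat.div_le_div_left (by omega) (by norm_num)
    have h6 : N/8 + 1 ≤ N := by omega
    omega
  have h2nR : (32:ℝ)/(1-p) ≤ 2^nR := by
    calc (32:ℝ)/(1-p) ≤ n1' + 1 := by
          have := hn1'
          push_cast
          linarith
    _ = (n1 : ℝ) := by rw [hn1]; push_cast; ring
    _ ≤ 2^n1 := by exact_mod_cast (Nat.lt_two_pow_self (n := n1)).le
    _ ≤ 2^nR := pow_le_pow_right₀ (by norm_num) hnRn1
  have hsplitnR : (2:ℝ)^(N-nR) * 2^nR = 2^N := by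
    rw [← pow_add]
    congr 1
    omega
  have h2nRpos : (0:ℝ) < 2^nR := by positivity
  have h2Npos : (0:ℝ) < (2:ℝ)^N := by positivity
  have hkey_nR : (2:ℝ)^(N-nR) ≤ 2^N * ((1-p)/32) := by
    have h5 : (2:ℝ)^(N-nR) * (32/(1-p)) ≤ 2^(N-nR) * 2^nR :=
      mul_le_mul_of_nonneg_left h2nR (by positivity)
    rw [hsplitnR] at h5
    calc (2:ℝ)^(N-nR) = (2^(N-nR) * (32/(1-p))) * ((1-p)/32) := by
          field_simp
    _ ≤ 2^N * ((1-p)/32) := mul_le_mul_of_nonneg_right h5 (by positivity)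
  have hcount1 : p * 2^N < 2^N - 2*2^(N - nR) := by
    nlinarith [hkey_nR, mul_pos h1p h2Npos]
  have hcount2 : p * ((N:ℝ) * 2^N) + 4*((N:ℝ)*2^(N-nR))
      + 2*(N:ℝ)*(((N:ℝ)*2^N)/((WW:ℝ)^2+1)) ≤ (N:ℝ)*2^N := by
    have hm0r : (16:ℝ)/(1-p) ≤ m0 := by
      rw [hm0]; push_cast; linarith
    have hm0pos : (0:ℝ) < m0 := by
      have : (0:ℕ) < m0 := by omega
      exact_mod_cast this
    have hWWsq : (m0:ℝ)^2 * N ≤ (WW:ℝ)^2 := by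
      have h5 : N < (s+1)*(s+1) := by
        rw [hs]
        exact Nat.lt_succ_sqrt N
      have h5r : (N:ℝ) ≤ ((s:ℝ)+1)*((s:ℝ)+1) := by
        have : (N:ℝ) < (((s+1)*(s+1) : ℕ) : ℝ) := by exact_mod_cast h5
        push_cast at this
        linarith
      have hWWr : (WW:ℝ) = (m0:ℝ)*((s:ℝ)+1) := by
        rw [hWW]; push_cast; ring
      rw [hWWr]
      calc (m0:ℝ)^2 * N ≤ (m0:ℝ)^2 * (((s:ℝ)+1)*((s:ℝ)+1)) := by
            apply mul_le_mul_of_nonneg_left h5r (by positivity)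
      _ = ((m0:ℝ)*((s:ℝ)+1))^2 := by ring
    have hterm : ((N:ℝ)*2^N)/((WW:ℝ)^2+1) ≤ 2^N/(m0:ℝ)^2 := by
      rw [div_le_div_iff₀ (by positivity) (by positivity)]
      calc (N:ℝ)*2^N*(m0:ℝ)^2 = 2^N * ((m0:ℝ)^2 * N) := by ring
      _ ≤ 2^N * ((WW:ℝ)^2+1) := by
            apply mul_le_mul_of_nonneg_left _ (by positivity)
            nlinarith [hWWsq]
    have hm0big : (4:ℝ)/(1-p) ≤ (m0:ℝ)^2 := by
      have h8 : (1:ℝ) ≤ m0 := by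
        have h81 : (1:ℕ) ≤ m0 := hm01
        exact_mod_cast h81
      have h16 : (16:ℝ) ≤ (m0:ℝ)*(1-p) := by
        rw [div_le_iff₀ h1p] at hm0r
        linarith
      rw [div_le_iff₀ h1p]
      nlinarith [mul_le_mul_of_nonneg_left h16 (by linarith : (0:ℝ) ≤ (m0:ℝ))]
    have hterm2 : 2*(N:ℝ)*(((N:ℝ)*2^N)/((WW:ℝ)^2+1)) ≤ (1-p)/2 * ((N:ℝ)*2^N) := by
      have h9 : ((N:ℝ)*2^N)/((WW:ℝ)^2+1) ≤ (1-p)/4 * 2^N := by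
        refine le_trans hterm ?_
        rw [div_le_iff₀ (by positivity : (0:ℝ) < (m0:ℝ)^2)]
        have hc41 : (4/(1-p)) * ((1-p)/4) = (1:ℝ) := by
          field_simp
        calc (2:ℝ)^N = ((4/(1-p)) * ((1-p)/4)) * 2^N := by rw [hc41, one_mul]
        _ = (4/(1-p)) * ((1-p)/4 * 2^N) := by ring
        _ ≤ (m0:ℝ)^2 * ((1-p)/4 * 2^N) :=
              mul_le_mul_of_nonneg_right hm0big (by positivity)
        _ = (1-p)/4*2^N*(m0:ℝ)^2 := by ring
      calc 2*(N:ℝ)*(((N:ℝ)*2^N)/((WW:ℝ)^2+1)) ≤ 2*(N:ℝ)*((1-p)/4 * 2^N) := by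
            apply mul_le_mul_of_nonneg_left h9 (by positivity)
      _ = (1-p)/2 * ((N:ℝ)*2^N) := by ring
    have hterm3 : 4*((N:ℝ)*2^(N-nR)) ≤ (1-p)/8 * ((N:ℝ)*2^N) := by
      calc 4*((N:ℝ)*2^(N-nR)) ≤ 4*((N:ℝ)*(2^N*((1-p)/32))) := by
            apply mul_le_mul_of_nonneg_left _ (by norm_num)
            apply mul_le_mul_of_nonneg_left hkey_nR (le_of_lt hNpos)
      _ = (1-p)/8 * ((N:ℝ)*2^N) := by ring
    nlinarith [hterm2, hterm3, mul_pos hNpos h2Npos, h1p]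
  exact construct N α p c WW B nR r hr hoE hcert hA hC hc1 hcount1 hcount2

end JE

/-- Theorem 3.7: for `0 < α, p < 1 < c < 2`, all sufficiently large `N` admit a
cooperative `p`-`c`-chaotic network exhibiting `p`-`α`-decoherence. -/
theorem cooperative_chaotic_alpha_decoherent_exists
    (α p : ℝ) (hα0 : 0 < α) (hα1 : α < 1) (hp0 : 0 < p) (hp1 : p < 1)
    (c : ℝ) (hc1 : 1 < c) (hc2 : c < 2) :
    ∃ N₀ : ℕ, ∀ N : ℕ, N₀ ≤ N →
      ∃ f : BState N → BState N,
        Monotone f ∧ pcChaotic f p c ∧ pAlphaDecoherent f p α := by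
  exact JE.main α p hα0 hα1 hp0 hp1 c hc1 hc2
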